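/- arXiv:2503.14347 — 3 statements merged into one kernel-verified Lean document; each statement's English description precedes it below -/
import Mathlib

section
/- For every real z ≥ 0 and every ε ∈ (0,1), cosh(z) ≥ √(1-ε²) · e^(εz). -/
lemma aux_log_le (x : ℝ) (hx : 1 ≤ x) : Real.log x ≤ (x - x⁻¹)/2 := by
  have h0 : 0 ≤ Real.log x := Real.log_nonneg hx
  rcases eq_or_lt_of_le h0 with h|h
  · have h1 : x⁻¹ ≤ 1 := inv_le_one_of_one_le₀ hx
    rw [← h]; linarith
  · have h2 : Real.log x < Real.sinh (Real.log x) := Real.self_lt_sinh_iff.2 h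
    rw [Real.sinh_eq, Real.exp_log (by linarith), Real.exp_neg, Real.exp_log (by linarith)] at h2
    linarith

-- Lemma A
lemma lemA (x : ℝ) (h0 : 0 ≤ x) (h1 : x < 1) :
    Real.log (1+x) - Real.log (1-x) ≤ 2*x/(1-x^2) := by
  have hm : (0:ℝ) < 1 - x := by linarith
  have hp : (0:ℝ) < 1 + x := by linarith
  have hr : (1:ℝ) ≤ (1+x)/(1-x) := by
    rw [le_div_iff₀ hm]; linarith
  have := aux_log_le _ hr
  rw [Real.log_div hp.ne' hm.ne'] at this
  have hinv : ((1+x)/(1-x))⁻¹ = (1-x)/(1+x) := by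
    rw [inv_div]
  rw [hinv] at this
  have hq : (1:ℝ) - x^2 ≠ 0 := by nlinarith
  have heq : ((1+x)/(1-x) - (1-x)/(1+x))/2 = 2*x/(1-x^2) := by
    field_simp
    ring
  linarith [heq ▸ this]

-- Lemma B : ε/2 * (log(1+ε) - log(1-ε)) ≤ -(log(1-ε) + log(1+ε))
lemma lemB (ε : ℝ) (h0 : 0 ≤ ε) (h1 : ε < 1) :
    ε/2 * (Real.log (1+ε) - Real.log (1-ε)) ≤ -(Real.log (1-ε) + Real.log (1+ε)) := by
  set φ : ℝ → ℝ := fun x => -(Real.log (1-x) + Real.log (1+x)) - x/2 * (Real.log (1+x) - Real.log (1-x)) with hφ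
  have key : ∀ x ∈ Set.Ico (0:ℝ) 1, HasDerivAt φ (x/(1-x^2) - (Real.log (1+x) - Real.log (1-x))/2) x := by
    intro x hx
    obtain ⟨hx0, hx1⟩ := hx
    have hm : (1:ℝ) - x ≠ 0 := by linarith
    have hp : (1:ℝ) + x ≠ 0 := by linarith
    have d1 : HasDerivAt (fun y : ℝ => Real.log (1-y)) (-(1-x)⁻¹) x := by
      have := (Real.hasDerivAt_log hm).comp x ((hasDerivAt_id x).const_sub 1)
      simpa [Function.comp_def] using this
    have d2 : HasDerivAt (fun y : ℝ => Real.log (1+y)) ((1+x)⁻¹) x := by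
      have := (Real.hasDerivAt_log hp).comp x ((hasDerivAt_id x).const_add 1)
      simpa [Function.comp_def] using this
    have d3 : HasDerivAt (fun y : ℝ => y/2) (1/2 : ℝ) x := by
      simpa using (hasDerivAt_id x).div_const 2
    have d := ((d1.add d2).neg).sub (d3.mul (d2.sub d1))
    have hq : (1:ℝ) - x^2 ≠ 0 := by nlinarith
    refine d.congr_deriv ?_
    simp only [Pi.sub_apply]
    field_simp
    ring
  have mono : MonotoneOn φ (Set.Icc 0 ε) := by
    apply monotoneOn_of_deriv_nonneg (convex_Icc 0 ε)
    · intro x hx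
      exact ((key x ⟨hx.1, lt_of_le_of_lt hx.2 h1⟩).continuousAt).continuousWithinAt
    · intro x hx
      rw [interior_Icc] at hx
      exact ((key x ⟨le_of_lt hx.1, lt_trans hx.2 h1⟩).differentiableAt).differentiableWithinAt
    · intro x hx
      rw [interior_Icc] at hx
      have hx0 := hx.1
      have hx1 : x < 1 := lt_trans hx.2 h1
      rw [(key x ⟨le_of_lt hx0, hx1⟩).deriv]
      have hA := lemA x (le_of_lt hx0) hx1
      have hden : (0:ℝ) < 1 - x^2 := by nlinarith
      have h2 : 2*x/(1-x^2) = 2*(x/(1-x^2)) := by ring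
      linarith
  have h00 : φ 0 = 0 := by simp [hφ]
  have := mono (Set.left_mem_Icc.2 h0) (Set.right_mem_Icc.2 h0) h0
  rw [h00] at this
  simp only [hφ] at this
  linarith

theorem cosh_ge_sqrt_mul_exp (z : ℝ) (hz : 0 ≤ z) (ε : ℝ) (hε : ε ∈ Set.Ioo (0:ℝ) 1) :
    Real.cosh z ≥ Real.sqrt (1 - ε ^ 2) * Real.exp (ε * z) := by
  obtain ⟨hε0, hε1⟩ := hε
  have hm : (0:ℝ) < 1 - ε := by linarith
  have hp : (0:ℝ) < 1 + ε := by linarith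
  have hq : (0:ℝ) < 1 - ε^2 := by nlinarith
  set s := Real.sqrt (1 - ε^2) with hsdef
  have hs : 0 < s := Real.sqrt_pos.2 hq
  have hs2 : s^2 = 1 - ε^2 := Real.sq_sqrt hq.le
  have hr : (0:ℝ) < (1+ε)/(1-ε) := div_pos hp hm
  have hr1 : (1:ℝ) ≤ (1+ε)/(1-ε) := by rw [le_div_iff₀ hm]; linarith
  set z0 := Real.log ((1+ε)/(1-ε)) / 2 with hz0def
  have hz0 : 0 ≤ z0 := by
    have := Real.log_nonneg hr1
    positivity
  set F : ℝ → ℝ := fun x => Real.cosh x * Real.exp (-(ε*x)) with hFdef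
  have hF : ∀ x : ℝ, HasDerivAt F ((Real.sinh x - ε * Real.cosh x) * Real.exp (-(ε*x))) x := by
    intro x
    have h1 : HasDerivAt (fun y : ℝ => -(ε*y)) (-ε) x := by
      simpa [Pi.neg_def] using ((hasDerivAt_id x).const_mul ε).neg
    have d := (Real.hasDerivAt_cosh x).mul h1.exp
    refine d.congr_deriv ?_
    ring
  -- sign of sinh x - ε cosh x
  have sign_neg : ∀ x : ℝ, x ≤ z0 → Real.sinh x - ε * Real.cosh x ≤ 0 := by
    intro x hx
    have h2x : Real.exp (2*x) ≤ (1+ε)/(1-ε) := by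
      rw [← Real.exp_log hr]
      exact Real.exp_le_exp.2 (by rw [hz0def] at hx; linarith)
    have hu : 0 < Real.exp x := Real.exp_pos x
    have h2 : Real.exp (2*x) = Real.exp x ^ 2 := by
      rw [two_mul, Real.exp_add]; ring
    rw [Real.sinh_eq, Real.cosh_eq, Real.exp_neg]
    rw [h2] at h2x
    have hineq : (1-ε) * Real.exp x ^ 2 ≤ 1 + ε := by
      rw [← sub_nonneg]
      have := (le_div_iff₀ hm).1 h2x
      linarith
    have : (1-ε) * Real.exp x ≤ (1+ε) * (Real.exp x)⁻¹ := by
      rw [← sub_nonneg]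
      have hinv : (Real.exp x)⁻¹ > 0 := by positivity
      have key : ((1+ε) * (Real.exp x)⁻¹ - (1-ε) * Real.exp x) * Real.exp x = (1+ε) - (1-ε)*Real.exp x ^2 := by
        field_simp
      nlinarith [key]
    nlinarith
  have sign_pos : ∀ x : ℝ, z0 ≤ x → 0 ≤ Real.sinh x - ε * Real.cosh x := by
    intro x hx
    have h2x : (1+ε)/(1-ε) ≤ Real.exp (2*x) := by
      rw [← Real.exp_log hr]
      exact Real.exp_le_exp.2 (by rw [hz0def] at hx; linarith)
    have hu : 0 < Real.exp x := Real.exp_pos x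
    have h2 : Real.exp (2*x) = Real.exp x ^ 2 := by
      rw [two_mul, Real.exp_add]; ring
    rw [Real.sinh_eq, Real.cosh_eq, Real.exp_neg]
    rw [h2] at h2x
    have hineq : 1 + ε ≤ (1-ε) * Real.exp x ^ 2 := by
      rw [← sub_nonneg]
      have := (div_le_iff₀ hm).1 h2x
      linarith
    have : (1+ε) * (Real.exp x)⁻¹ ≤ (1-ε) * Real.exp x := by
      rw [← sub_nonneg]
      have hinv : (Real.exp x)⁻¹ > 0 := by positivity
      have key : ((1-ε) * Real.exp x - (1+ε) * (Real.exp x)⁻¹) * Real.exp x = (1-ε)*Real.exp x ^2 - (1+ε) := by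
        field_simp
      nlinarith [key]
    nlinarith
  -- value at z0
  set u := Real.sqrt ((1+ε)/(1-ε)) with hudef
  have hu : 0 < u := Real.sqrt_pos.2 hr
  have hexpz0 : Real.exp z0 = u := by
    rw [hz0def, ← Real.log_sqrt hr.le, Real.exp_log (Real.sqrt_pos.2 hr)]
  have hueq : u = s / (1-ε) := by
    rw [hudef, hsdef, show (1+ε)/(1-ε) = (1-ε^2)/(1-ε)^2 by field_simp; ring,
      Real.sqrt_div hq.le, Real.sqrt_sq hm.le]
  have hA : 1 - ε^2 ≤ Real.exp (-(ε*z0)) := by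
    have hlog : Real.log (1-ε^2) ≤ -(ε*z0) := by
      have hlB := lemB ε hε0.le hε1
      have h1 : Real.log (1-ε^2) = Real.log (1-ε) + Real.log (1+ε) := by
        rw [show (1:ℝ) - ε^2 = (1-ε)*(1+ε) by ring, Real.log_mul hm.ne' hp.ne']
      have h2 : ε*z0 = ε/2 * (Real.log (1+ε) - Real.log (1-ε)) := by
        rw [hz0def, Real.log_div hp.ne' hm.ne']; ring
      rw [h1, h2]; linarith
    calc 1 - ε^2 = Real.exp (Real.log (1-ε^2)) := (Real.exp_log hq).symm
    _ ≤ Real.exp (-(ε*z0)) := Real.exp_le_exp.2 hlog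
  have hFz0 : s ≤ F z0 := by
    have hcosh : Real.cosh z0 = (u + u⁻¹)/2 := by
      rw [Real.cosh_eq, Real.exp_neg, hexpz0]
    have hge : F z0 ≥ (u + u⁻¹)/2 * (1 - ε^2) := by
      simp only [hFdef]
      rw [hcosh]
      have hpos : (0:ℝ) ≤ (u + u⁻¹)/2 := by positivity
      exact mul_le_mul_of_nonneg_left hA hpos
    have hval : (u + u⁻¹)/2 * (1 - ε^2) = s := by
      rw [hueq, inv_div]
      field_simp
      linear_combination (1 - ε^2 - 2*(1-ε)) * hs2
    linarith [hval ▸ hge]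
  -- monotonicity
  have hFz : F z0 ≤ F z := by
    rcases le_total z z0 with h | h
    · have mono : AntitoneOn F (Set.Icc 0 z0) := by
        apply antitoneOn_of_deriv_nonpos (convex_Icc 0 z0)
        · exact fun x _ => (hF x).continuousAt.continuousWithinAt
        · exact fun x _ => (hF x).differentiableAt.differentiableWithinAt
        · intro x hx
          rw [interior_Icc] at hx
          rw [(hF x).deriv]
          have := sign_neg x hx.2.le
          nlinarith [Real.exp_pos (-(ε*x))]
      exact mono ⟨hz, h⟩ ⟨hz0, le_refl z0⟩ h
    · have mono : MonotoneOn F (Set.Ici z0) := by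
        apply monotoneOn_of_deriv_nonneg (convex_Ici z0)
        · exact fun x _ => (hF x).continuousAt.continuousWithinAt
        · exact fun x _ => (hF x).differentiableAt.differentiableWithinAt
        · intro x hx
          rw [interior_Ici] at hx
          rw [(hF x).deriv]
          have := sign_pos x hx.le
          nlinarith [Real.exp_pos (-(ε*x))]
      exact mono (Set.self_mem_Ici) h h
  have hfinal : s ≤ Real.cosh z * Real.exp (-(ε*z)) := le_trans hFz0 hFz
  have := mul_le_mul_of_nonneg_right hfinal (Real.exp_pos (ε*z)).le
  rw [mul_assoc, ← Real.exp_add] at this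
  simpa using this
end

section
/- Let n ≥ 1 and let G(z) = ∫₀^z (√(1 + (n/(2y))²) - n/(2y)) dy. Then for every ε ∈ (0,1) and every z ≥ 0, G(z) ≥ εz + (n/2)·log(1-ε²). -/
theorem G_ge_linear (n : ℝ) (hn : 1 ≤ n) (ε : ℝ) (hε : ε ∈ Set.Ioo (0:ℝ) 1)
    (z : ℝ) (hz : 0 ≤ z) :
    (∫ y in (0:ℝ)..z, (Real.sqrt (1 + (n / (2 * y)) ^ 2) - n / (2 * y)))
      ≥ ε * z + (n / 2) * Real.log (1 - ε ^ 2) := by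
  obtain ⟨hε0, hε1⟩ := hε
  have hε2 : 0 < 1 - ε ^ 2 := by nlinarith
  set a : ℝ := n / 2 with ha
  have ha0 : (0:ℝ) < a := by rw [ha]; linarith
  have hsqpos : ∀ y : ℝ, (0:ℝ) < y ^ 2 + a ^ 2 := fun y => by positivity
  have hs : ∀ y : ℝ, 0 < Real.sqrt (y ^ 2 + a ^ 2) := fun y =>
    Real.sqrt_pos.2 (hsqpos y)
  have hssq : ∀ y : ℝ, (Real.sqrt (y ^ 2 + a ^ 2)) ^ 2 = y ^ 2 + a ^ 2 := fun y =>
    Real.sq_sqrt (hsqpos y).le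
  set F : ℝ → ℝ := fun y => Real.sqrt (y ^ 2 + a ^ 2)
      - a * Real.log (a + Real.sqrt (y ^ 2 + a ^ 2)) with hF
  -- derivative of F
  have hderiv : ∀ y : ℝ, HasDerivAt F (y / (a + Real.sqrt (y ^ 2 + a ^ 2))) y := by
    intro y
    have h1 : HasDerivAt (fun y : ℝ => y ^ 2 + a ^ 2) (2 * y) y := by
      simpa using (hasDerivAt_pow 2 y).add_const (a ^ 2)
    have h2 : HasDerivAt (fun y : ℝ => Real.sqrt (y ^ 2 + a ^ 2))
        (1 / (2 * Real.sqrt (y ^ 2 + a ^ 2)) * (2 * y)) y :=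
      (Real.hasDerivAt_sqrt (hsqpos y).ne').comp y h1
    have h2' : HasDerivAt (fun y : ℝ => Real.sqrt (y ^ 2 + a ^ 2))
        (y / Real.sqrt (y ^ 2 + a ^ 2)) y := by
      convert h2 using 1
      field_simp
    have h3 : HasDerivAt (fun y : ℝ => a + Real.sqrt (y ^ 2 + a ^ 2))
        (y / Real.sqrt (y ^ 2 + a ^ 2)) y := h2'.const_add a
    have h4 : HasDerivAt (fun y : ℝ => Real.log (a + Real.sqrt (y ^ 2 + a ^ 2)))
        ((y / Real.sqrt (y ^ 2 + a ^ 2)) / (a + Real.sqrt (y ^ 2 + a ^ 2))) y :=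
      h3.log (by positivity)
    have h5 : HasDerivAt F (y / Real.sqrt (y ^ 2 + a ^ 2) - a * (y / Real.sqrt (y ^ 2 + a ^ 2)
        / (a + Real.sqrt (y ^ 2 + a ^ 2)))) y := h2'.sub (h4.const_mul a)
    convert h5 using 1
    have hsne : Real.sqrt (y ^ 2 + a ^ 2) ≠ 0 := (hs y).ne'
    have hase : a + Real.sqrt (y ^ 2 + a ^ 2) ≠ 0 := by positivity
    field_simp
    nlinarith [hssq y]
  -- continuity of the nice integrand
  have hcont : Continuous (fun y : ℝ => y / (a + Real.sqrt (y ^ 2 + a ^ 2))) := by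
    apply continuous_id.div
    · exact continuous_const.add (Real.continuous_sqrt.comp (by continuity))
    · intro y; positivity
  -- the two integrands agree a.e. on the interval
  have key : (∫ y in (0:ℝ)..z, (Real.sqrt (1 + (n / (2 * y)) ^ 2) - n / (2 * y)))
      = ∫ y in (0:ℝ)..z, y / (a + Real.sqrt (y ^ 2 + a ^ 2)) := by
    apply intervalIntegral.integral_congr_ae
    filter_upwards with x hx
    rw [Set.uIoc_of_le hz] at hx
    have hx0 : 0 < x := hx.1
    have hxne : x ≠ 0 := hx0.ne'
    have h6 : n / (2 * x) = a / x := by rw [ha, div_div]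
    have h7 : Real.sqrt (1 + (a / x) ^ 2) = Real.sqrt (x ^ 2 + a ^ 2) / x := by
      rw [show (1 + (a / x) ^ 2) = (x ^ 2 + a ^ 2) / x ^ 2 by field_simp,
        Real.sqrt_div (hsqpos x).le, Real.sqrt_sq hx0.le]
    rw [h6, h7]
    have hase : a + Real.sqrt (x ^ 2 + a ^ 2) ≠ 0 := by positivity
    field_simp
    nlinarith [hssq x]
  rw [key, intervalIntegral.integral_eq_sub_of_hasDerivAt (fun y _ => hderiv y)
    (hcont.intervalIntegrable 0 z)]
  -- evaluate F 0
  have hF0 : F 0 = a - a * Real.log (2 * a) := by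
    simp only [hF]
    rw [show (0:ℝ) ^ 2 + a ^ 2 = a ^ 2 by ring, Real.sqrt_sq ha0.le]
    ring_nf
  set s : ℝ := Real.sqrt (z ^ 2 + a ^ 2) with hsdef
  have hs0 : 0 < s := hs z
  have hs2 : s ^ 2 = z ^ 2 + a ^ 2 := hssq z
  have hFz : F z = s - a * Real.log (a + s) := rfl
  rw [hFz, hF0]
  -- key algebraic inequality
  have h1 : (1 + ε ^ 2) * s ≥ 2 * ε * z + (1 - ε ^ 2) * a := by
    have hR : 0 < 2 * ε * z + (1 - ε ^ 2) * a := by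
      have : 0 ≤ 2 * ε * z := by positivity
      nlinarith [mul_pos hε2 ha0]
    have key2 : ((1 + ε ^ 2) * s) ^ 2 - (2 * ε * z + (1 - ε ^ 2) * a) ^ 2
        = ((1 - ε ^ 2) * z - 2 * ε * a) ^ 2 := by
      linear_combination (1 + ε ^ 2) ^ 2 * hs2
    nlinarith [key2, sq_nonneg ((1 - ε ^ 2) * z - 2 * ε * a), hR,
      mul_pos (by positivity : (0:ℝ) < 1 + ε ^ 2) hs0]
  have h2 : Real.log ((a + s) * (1 - ε ^ 2) / (2 * a))
      ≤ (a + s) * (1 - ε ^ 2) / (2 * a) - 1 :=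
    Real.log_le_sub_one_of_pos (by positivity)
  have h3 : Real.log ((a + s) * (1 - ε ^ 2) / (2 * a))
      = Real.log (a + s) + Real.log (1 - ε ^ 2) - Real.log (2 * a) := by
    rw [Real.log_div (by positivity) (by positivity), Real.log_mul (by positivity) hε2.ne']
  have h4 := mul_le_mul_of_nonneg_left h2 ha0.le
  rw [h3] at h4
  have h5 : a * ((a + s) * (1 - ε ^ 2) / (2 * a) - 1) = (a + s) * (1 - ε ^ 2) / 2 - a := by
    field_simp
  rw [h5] at h4
  rw [ge_iff_le]
  nlinarith [h1, h4]
end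

section
/- For all real numbers n > 0, σ > 0, t > 0: inf over ε ∈ (0,1) of exp( nε²/(2(1-ε²)) + σ²t²/(2ε²) ) equals exp( (√n + σt)²/2 - n/2 ), attained at ε* = √( σt/(σt + √n) ). -/
theorem inf_exp_identity (n σ t : ℝ) (hn : 0 < n) (hσ : 0 < σ) (ht : 0 < t) :
    IsLeast
      ((fun ε : ℝ => Real.exp (n * ε ^ 2 / (2 * (1 - ε ^ 2)) + σ ^ 2 * t ^ 2 / (2 * ε ^ 2))) ''
        Set.Ioo (0:ℝ) 1)
      (Real.exp ((Real.sqrt n + σ * t) ^ 2 / 2 - n / 2)) ∧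
    (Real.sqrt (σ * t / (σ * t + Real.sqrt n)) ∈ Set.Ioo (0:ℝ) 1 ∧
      Real.exp (n * (Real.sqrt (σ * t / (σ * t + Real.sqrt n))) ^ 2 /
          (2 * (1 - (Real.sqrt (σ * t / (σ * t + Real.sqrt n))) ^ 2)) +
        σ ^ 2 * t ^ 2 / (2 * (Real.sqrt (σ * t / (σ * t + Real.sqrt n))) ^ 2))
        = Real.exp ((Real.sqrt n + σ * t) ^ 2 / 2 - n / 2)) := by
  set r := Real.sqrt n with hr
  have hr0 : 0 < r := Real.sqrt_pos.mpr hn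
  have hr2 : r ^ 2 = n := Real.sq_sqrt hn.le
  set s := σ * t with hs
  have hs0 : 0 < s := mul_pos hσ ht
  have hsr : 0 < s + r := by linarith
  have hfrac : 0 < s / (s + r) := div_pos hs0 hsr
  have hfrac1 : s / (s + r) < 1 := (div_lt_one hsr).mpr (by linarith)
  have hε2 : (Real.sqrt (s / (s + r))) ^ 2 = s / (s + r) := Real.sq_sqrt hfrac.le
  have hmem : Real.sqrt (s / (s + r)) ∈ Set.Ioo (0:ℝ) 1 := by
    constructor
    · exact Real.sqrt_pos.mpr hfrac
    · nlinarith [Real.sqrt_nonneg (s / (s + r))]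
  have heq : n * (Real.sqrt (s / (s + r))) ^ 2 / (2 * (1 - (Real.sqrt (s / (s + r))) ^ 2)) +
      σ ^ 2 * t ^ 2 / (2 * (Real.sqrt (s / (s + r))) ^ 2) = (r + s) ^ 2 / 2 - n / 2 := by
    rw [hε2]
    have h1 : (1 : ℝ) - s / (s + r) = r / (s + r) := by field_simp; ring
    rw [h1, ← hr2]
    have hσt : σ ^ 2 * t ^ 2 = s ^ 2 := by rw [hs]; ring
    rw [hσt]
    field_simp
    ring
  refine ⟨⟨⟨Real.sqrt (s / (s + r)), hmem, by beta_reduce; rw [heq]⟩, ?_⟩, hmem, by rw [heq]⟩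
  rintro y ⟨ε, ⟨hε0, hε1⟩, rfl⟩
  simp only
  rw [Real.exp_le_exp]
  have h1 : 0 < 1 - ε ^ 2 := by nlinarith
  have hσt : σ ^ 2 * t ^ 2 = s ^ 2 := by rw [hs]; ring
  rw [hσt, ← hr2, div_add_div _ _ (by positivity) (by positivity), le_div_iff₀ (by positivity)]
  nlinarith [sq_nonneg ((r + s) * ε ^ 2 - s), sq_nonneg ε, sq_nonneg (ε * (r + s))]
end
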